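/- Let u and v be positive integers and p a prime. Let w and w' be words over {0,1} (possibly of different lengths) with w ≠ w'. If every entry of M_{u,v}(w) and every entry of M_{u,v}(w') is strictly less than p, then the reductions modulo p of M_{u,v}(w) and M_{u,v}(w') (as 2×2 matrices over ℤ/pℤ) are distinct; in other words, the BSV hash has no collisions among such words. -/
import Mathlib


open Matrix Finset

def Lm (u : ℕ) : Matrix (Fin 2) (Fin 2) ℕ := !![1, 0; u, 1]
def Rm (v : ℕ) : Matrix (Fin 2) (Fin 2) ℕ := !![1, v; 0, 1]

/-- The product of the matrices corresponding to a word: `false ↦ L_u`, `true ↦ R_v`. -/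
def wordProd (u v : ℕ) (w : List Bool) : Matrix (Fin 2) (Fin 2) ℕ :=
  (w.map (fun b => if b then Rm v else Lm u)).prod

/-- μ of a matrix: maximum of the four entries. -/
def matMax (M : Matrix (Fin 2) (Fin 2) ℕ) : ℕ :=
  max (max (M 0 0) (M 0 1)) (max (M 1 0) (M 1 1))

/-- μ(𝒯^{(u,v)}(I₂;n)): maximum of μ over all products of exactly n matrices each L_u or R_v. -/
def levelMax (u v n : ℕ) : ℕ :=
  Finset.univ.sup (fun w : Fin n → Bool => matMax (wordProd u v (List.ofFn w)))

lemma wordProd_nil (u v : ℕ) : wordProd u v [] = 1 := rfl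

lemma wordProd_cons (u v : ℕ) (b : Bool) (w : List Bool) :
    wordProd u v (b :: w) = (if b then Rm v else Lm u) * wordProd u v w := by
  simp [wordProd]

lemma mulL (u : ℕ) (N : Matrix (Fin 2) (Fin 2) ℕ) :
    Lm u * N = !![N 0 0, N 0 1; u * N 0 0 + N 1 0, u * N 0 1 + N 1 1] := by
  ext i j
  fin_cases i <;> fin_cases j <;>
    simp [Lm, Matrix.mul_apply, Fin.sum_univ_two]

lemma mulR (v : ℕ) (N : Matrix (Fin 2) (Fin 2) ℕ) :
    Rm v * N = !![N 0 0 + v * N 1 0, N 0 1 + v * N 1 1; N 1 0, N 1 1] := by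
  ext i j
  fin_cases i <;> fin_cases j <;>
    simp [Rm, Matrix.mul_apply, Fin.sum_univ_two]

lemma diag_pos (u v : ℕ) (w : List Bool) :
    1 ≤ wordProd u v w 0 0 ∧ 1 ≤ wordProd u v w 1 1 := by
  induction w with
  | nil => simp [wordProd_nil, Matrix.one_apply]
  | cons b t ih =>
    rw [wordProd_cons]
    cases b <;> simp [mulL, mulR] <;> omega

lemma rowsum_false (u v : ℕ) (hu : 1 ≤ u) (t : List Bool) :
    wordProd u v (false :: t) 0 0 + wordProd u v (false :: t) 0 1 <
      wordProd u v (false :: t) 1 0 + wordProd u v (false :: t) 1 1 := by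
  have h := diag_pos u v t
  rw [wordProd_cons]
  simp only [if_neg, Bool.false_eq_true, ite_false, mulL]
  simp
  nlinarith [h.1, h.2]

lemma rowsum_true (u v : ℕ) (hv : 1 ≤ v) (t : List Bool) :
    wordProd u v (true :: t) 1 0 + wordProd u v (true :: t) 1 1 <
      wordProd u v (true :: t) 0 0 + wordProd u v (true :: t) 0 1 := by
  have h := diag_pos u v t
  rw [wordProd_cons]
  simp only [ite_true, mulR]
  simp
  nlinarith [h.1, h.2]

lemma wordProd_inj (u v : ℕ) (hu : 1 ≤ u) (hv : 1 ≤ v) :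
    ∀ w w' : List Bool, wordProd u v w = wordProd u v w' → w = w' := by
  intro w
  induction w with
  | nil =>
    intro w' h
    cases w' with
    | nil => rfl
    | cons b t =>
      exfalso
      have e : ∀ i j : Fin 2, wordProd u v [] i j = wordProd u v (b :: t) i j := by
        intro i j; rw [h]
      simp only [wordProd_nil, Matrix.one_apply] at e
      have e00 := e 0 0; have e01 := e 0 1; have e10 := e 1 0; have e11 := e 1 1
      simp at e00 e01 e10 e11
      cases b
      · have := rowsum_false u v hu t; omega
      · have := rowsum_true u v hv t; omega
  | cons a s ih =>
    intro w' h
    cases w' with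
    | nil =>
      exfalso
      have e : ∀ i j : Fin 2, wordProd u v (a :: s) i j = wordProd u v [] i j := by
        intro i j; rw [h]
      simp only [wordProd_nil, Matrix.one_apply] at e
      have e00 := e 0 0; have e01 := e 0 1; have e10 := e 1 0; have e11 := e 1 1
      simp at e00 e01 e10 e11
      cases a
      · have := rowsum_false u v hu s; omega
      · have := rowsum_true u v hv s; omega
    | cons b t =>
      have hab : a = b := by
        by_contra hab
        have e : ∀ i j : Fin 2, wordProd u v (a :: s) i j = wordProd u v (b :: t) i j := by
          intro i j; rw [h]
        have e00 := e 0 0; have e01 := e 0 1; have e10 := e 1 0; have e11 := e 1 1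
        cases a <;> cases b
        · exact hab rfl
        · have h1 := rowsum_false u v hu s
          have h2 := rowsum_true u v hv t
          omega
        · have h1 := rowsum_true u v hv s
          have h2 := rowsum_false u v hu t
          omega
        · exact hab rfl
      subst hab
      have hst : wordProd u v s = wordProd u v t := by
        rw [wordProd_cons, wordProd_cons] at h
        cases a
        · simp only [Bool.false_eq_true, ite_false, mulL] at h
          have e : ∀ i j : Fin 2,
              (!![wordProd u v s 0 0, wordProd u v s 0 1;
                  u * wordProd u v s 0 0 + wordProd u v s 1 0,
                  u * wordProd u v s 0 1 + wordProd u v s 1 1] : Matrix (Fin 2) (Fin 2) ℕ) i j =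
              !![wordProd u v t 0 0, wordProd u v t 0 1;
                  u * wordProd u v t 0 0 + wordProd u v t 1 0,
                  u * wordProd u v t 0 1 + wordProd u v t 1 1] i j := by
            intro i j; rw [h]
          have e00 := e 0 0; have e01 := e 0 1; have e10 := e 1 0; have e11 := e 1 1
          simp at e00 e01 e10 e11
          rw [e00] at e10; rw [e01] at e11
          ext i j
          fin_cases i <;> fin_cases j <;> simp <;> omega
        · simp only [ite_true, mulR] at h
          have e : ∀ i j : Fin 2,
              (!![wordProd u v s 0 0 + v * wordProd u v s 1 0,
                  wordProd u v s 0 1 + v * wordProd u v s 1 1;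
                  wordProd u v s 1 0, wordProd u v s 1 1] : Matrix (Fin 2) (Fin 2) ℕ) i j =
              !![wordProd u v t 0 0 + v * wordProd u v t 1 0,
                  wordProd u v t 0 1 + v * wordProd u v t 1 1;
                  wordProd u v t 1 0, wordProd u v t 1 1] i j := by
            intro i j; rw [h]
          have e00 := e 0 0; have e01 := e 0 1; have e10 := e 1 0; have e11 := e 1 1
          simp at e00 e01 e10 e11
          rw [e10] at e00; rw [e11] at e01
          ext i j
          fin_cases i <;> fin_cases j <;> simp <;> omega
      rw [ih t hst]

theorem stmt19 (u v : ℕ) (hu : 1 ≤ u) (hv : 1 ≤ v) (p : ℕ) (hp : p.Prime)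
    (w w' : List Bool) (hne : w ≠ w')
    (hw : ∀ i j : Fin 2, wordProd u v w i j < p)
    (hw' : ∀ i j : Fin 2, wordProd u v w' i j < p) :
    (wordProd u v w).map (Nat.cast : ℕ → ZMod p) ≠
      (wordProd u v w').map (Nat.cast : ℕ → ZMod p) := by
  intro h
  apply hne
  apply wordProd_inj u v hu hv
  ext i j
  have hij : ((wordProd u v w i j : ℕ) : ZMod p) = ((wordProd u v w' i j : ℕ) : ZMod p) := by
    have := congrFun (congrFun h i) j
    simpa [Matrix.map_apply] using this
  haveI : NeZero p := ⟨hp.pos.ne'⟩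
  calc wordProd u v w i j = ((wordProd u v w i j : ℕ) : ZMod p).val :=
        (ZMod.val_cast_of_lt (hw i j)).symm
    _ = ((wordProd u v w' i j : ℕ) : ZMod p).val := by rw [hij]
    _ = wordProd u v w' i j := ZMod.val_cast_of_lt (hw' i j)
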